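/- Let V ⊆ V' be an extension of valuation rings and let (v_i)_{i<λ} be a fundamental pseudo convergent sequence in V (i.e., for every γ in the value group Γ of V, val(v_i − v_{i'}) > γ for all sufficiently large i < i' < λ). If x ∈ V' is a pseudo limit of (v_i) which is transcendental over the fraction field K of V, and V ⊆ V' is an immediate extension, then (v_i) is a transcendental pseudo convergent sequence: for every nonzero polynomial f ∈ V[X], val(f(v_i)) = val(f(x)) for all sufficiently large i < λ, hence val(f(v_i)) is eventually constant. -/

import Mathlib

open Polynomial

section ValuationDefs

variable {Γ : Type*} [AddCommGroup Γ] [LinearOrder Γ] [IsOrderedAddMonoid Γ] {K : Type*} [Field K]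

/-- `val` is an (additive, Krull) valuation on the field `K` with values in
`WithTop Γ`: `val 0 = ⊤`, nonzero elements have values in `Γ`, `val` is
multiplicative-to-additive and satisfies the ultrametric inequality.
The valuation ring is `{x | 0 ≤ val x}`. -/
def IsAddValuation (val : K → WithTop Γ) : Prop :=
  val 0 = ⊤ ∧ (∀ x : K, x ≠ 0 → val x ≠ ⊤) ∧
    (∀ x y : K, val (x * y) = val x + val y) ∧
    ∀ x y : K, min (val x) (val y) ≤ val (x + y)

/-- The valuation ring of the subfield `K₀` gives an immediate extension inside
the valued field `K`: the inclusion induces isomorphisms on value groups and on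
residue fields. -/
def IsImmediate (val : K → WithTop Γ) (K₀ : Subfield K) : Prop :=
  (∀ x : K, x ≠ 0 → ∃ y ∈ K₀, val y = val x) ∧
    ∀ x : K, val x = 0 → ∃ y ∈ K₀, 0 < val (x - y)

/-- `(v i)_{i < lam}` is a pseudo convergent sequence:
`val (v i - v i'') < val (v i' - v i'')` for `i < i' < i'' < lam`. -/
def PseudoConvergent (val : K → WithTop Γ) (lam : Ordinal) (v : Ordinal → K) : Prop :=
  ∀ i i' i'' : Ordinal, i < i' → i' < i'' → i'' < lam →
    val (v i - v i'') < val (v i' - v i'')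

/-- `x` is a pseudo limit of `(v i)_{i < lam}`: `val (x - v i)` is strictly
increasing in `i`. -/
def IsPseudoLimit (val : K → WithTop Γ) (lam : Ordinal) (v : Ordinal → K) (x : K) : Prop :=
  ∀ i i' : Ordinal, i < i' → i' < lam → val (x - v i) < val (x - v i')

/-- the polynomial `f` has all its coefficients in the valuation ring of the
subfield `K₀`, i.e. `f ∈ V[X]` where `V = K₀ ∩ {0 ≤ val}`. -/
def CoeffsIn (val : K → WithTop Γ) (K₀ : Subfield K) (f : Polynomial K) : Prop :=
  ∀ n : ℕ, f.coeff n ∈ K₀ ∧ 0 ≤ val (f.coeff n)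

/-- the values of `f` along the sequence `v` are eventually strictly
increasing (witnessing that `v` is algebraic via `f`). -/
def EvIncreasing (val : K → WithTop Γ) (lam : Ordinal) (v : Ordinal → K)
    (f : Polynomial K) : Prop :=
  ∃ ν : Ordinal, ν < lam ∧ ∀ i i' : Ordinal, ν < i → i < i' → i' < lam →
    val (f.eval (v i)) < val (f.eval (v i'))

end ValuationDefs


section AuxLemmas
variable {G : Type*} [AddCommGroup G] [LinearOrder G] [IsOrderedAddMonoid G] {K : Type*} [Field K]

private theorem auxG_self_add_self {g : G} (h : g + g = 0) : g = 0 := by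
  rcases lt_trichotomy g 0 with hg | hg | hg
  · have h4 := add_lt_add hg hg
    rw [h] at h4
    simpa using h4
  · exact hg
  · have h4 := add_lt_add hg hg
    rw [h] at h4
    simpa using h4

theorem isAddValuation_val_one {val : K → WithTop G} (h : IsAddValuation val) :
    val 1 = 0 := by
  obtain ⟨h0, hne, hmul, hadd⟩ := h
  have h1 : val 1 = val 1 + val 1 := by
    conv_lhs => rw [show (1 : K) = 1 * 1 by ring, hmul]
  obtain ⟨g, hg⟩ := WithTop.ne_top_iff_exists.mp (hne 1 one_ne_zero)
  rw [← hg] at h1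
  have h2 : g + g = g := by exact_mod_cast h1.symm
  have h3 : g = 0 := add_eq_right.mp h2
  rw [← hg, h3]; rfl

theorem isAddValuation_val_neg {val : K → WithTop G} (h : IsAddValuation val) (a : K) :
    val (-a) = val a := by
  obtain ⟨h0, hne, hmul, hadd⟩ := h
  have hm1 : val (-1 : K) = 0 := by
    have h1 : val (1 : K) = val (-1) + val (-1) := by
      conv_lhs => rw [show (1 : K) = (-1) * (-1) by ring, hmul]
    rw [isAddValuation_val_one ⟨h0, hne, hmul, hadd⟩] at h1
    obtain ⟨g, hg⟩ := WithTop.ne_top_iff_exists.mp (hne (-1) (by norm_num))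
    rw [← hg] at h1 ⊢
    have h2 : g + g = 0 := by exact_mod_cast h1.symm
    rw [auxG_self_add_self h2]; rfl
  rw [show (-a : K) = (-1) * a by ring, hmul, hm1, zero_add]

theorem isAddValuation_add_eq_left {val : K → WithTop G} (h : IsAddValuation val)
    {a b : K} (hab : val a < val b) : val (a + b) = val a := by
  obtain ⟨h0, hne, hmul, hadd⟩ := id h
  refine le_antisymm ?_ ?_
  · have h5 := hadd (a + b) (-b)
    rw [add_neg_cancel_right, isAddValuation_val_neg h] at h5
    rcases le_total (val (a + b)) (val b) with hc | hc
    · rwa [min_eq_left hc] at h5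
    · rw [min_eq_right hc] at h5
      exact absurd (lt_of_lt_of_le hab h5) (lt_irrefl _)
  · have h5 := hadd a b
    rwa [min_eq_left hab.le] at h5

/-- The valuation subring of `val`. -/
def valSubring (val : K → WithTop G) (h : IsAddValuation val) : Subring K where
  carrier := {a : K | 0 ≤ val a}
  zero_mem' := by simp [h.1]
  one_mem' := by simp [isAddValuation_val_one h]
  add_mem' := fun {a b} ha hb => le_trans (le_min ha hb) (h.2.2.2 a b)
  mul_mem' := fun {a b} ha hb => by
    have := h.2.2.1 a b
    rw [Set.mem_setOf_eq, this]
    exact add_nonneg ha hb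
  neg_mem' := fun {a} ha => by
    rw [Set.mem_setOf_eq, isAddValuation_val_neg h]
    exact ha

theorem mem_valSubring {val : K → WithTop G} {h : IsAddValuation val} {a : K} :
    a ∈ valSubring val h ↔ 0 ≤ val a := Iff.rfl

end AuxLemmas

/-- **A fundamental pseudo convergent sequence with a transcendental pseudo
limit is transcendental.**  If `(v i)_{i<λ}` is fundamental (its differences are
eventually larger than any element of the value group `Γ`), `x ∈ V'` is a
pseudo limit transcendental over `K`, and `V ⊆ V'` is immediate, then for every
nonzero `f ∈ V[X]` one has `val (f (v i)) = val (f x)` for all large `i < λ`;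
in particular `val (f (v i))` is eventually constant. -/
theorem fundamental_transcendental {Γ : Type*} [AddCommGroup Γ] [LinearOrder Γ] [IsOrderedAddMonoid Γ]
    {K' : Type*} [Field K'] (val : K' → WithTop Γ) (hval : IsAddValuation val)
    (Ksub : Subfield K') (himm : IsImmediate val Ksub)
    (lam : Ordinal) (hlam : Order.IsSuccLimit lam)
    (v : Ordinal → K') (hv : ∀ i : Ordinal, i < lam → v i ∈ Ksub ∧ 0 ≤ val (v i))
    (hpc : PseudoConvergent val lam v)
    (hfund : ∀ g : Γ, ∃ ν : Ordinal, ν < lam ∧ ∀ i i' : Ordinal,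
      ν < i → i < i' → i' < lam → (g : WithTop Γ) < val (v i - v i'))
    (x : K') (hx : 0 ≤ val x) (hlim : IsPseudoLimit val lam v x)
    (htrans : ∀ f : Polynomial K', f ≠ 0 → (∀ n : ℕ, f.coeff n ∈ Ksub) →
      f.eval x ≠ 0) :
    ∀ f : Polynomial K', f ≠ 0 → CoeffsIn val Ksub f →
      ∃ ν : Ordinal, ν < lam ∧ ∀ i : Ordinal, ν < i → i < lam →
        val (f.eval (v i)) = val (f.eval x) := by
  intro f hf hcf
  classical
  obtain ⟨h0, hne, hmul, hadd⟩ := id hval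
  set R : Subring K' := valSubring val hval with hR
  have hcoeffs : (↑f.coeffs : Set K') ⊆ R := by
    intro a ha
    simp only [Polynomial.coeffs, Finset.coe_image, Set.mem_image] at ha
    obtain ⟨n, -, rfl⟩ := ha
    exact (hcf n).2
  set fR : Polynomial R := f.toSubring R hcoeffs with hfR
  have hevalR : ∀ a : R, ((fR.eval a : R) : K') = f.eval (a : K') := by
    intro a
    have hmap := Polynomial.map_toSubring f R hcoeffs
    conv_rhs => rw [← hmap]
    rw [Polynomial.eval_map, show ((a : K')) = R.subtype a from rfl,
      Polynomial.eval₂_hom]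
    rfl
  have hfx : f.eval x ≠ 0 := htrans f hf (fun n => (hcf n).1)
  obtain ⟨g, hg⟩ := WithTop.ne_top_iff_exists.mp (hne _ hfx)
  obtain ⟨ν, hν, hν2⟩ := hfund g
  refine ⟨ν, hν, fun i hi hilam => ?_⟩
  have hxR : x ∈ R := hx
  have hviR : v i ∈ R := (hv i hilam).2
  obtain ⟨c, hc⟩ := Polynomial.sub_dvd_eval_sub (⟨v i, hviR⟩ : R) ⟨x, hxR⟩ fR
  have hkey : f.eval (v i) - f.eval x = (v i - x) * (c : K') := by
    have h6 := congrArg (fun r : R => (r : K')) hc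
    simpa [hevalR] using h6
  have hisucc : Order.succ i < lam := hlam.succ_lt hilam
  have hlt1 : (g : WithTop Γ) < val (v i - v (Order.succ i)) :=
    hν2 i (Order.succ i) hi (Order.lt_succ i) hisucc
  have hxvi : val (v i - v (Order.succ i)) = val (v i - x) := by
    have h1 : val (v i - x) < val (x - v (Order.succ i)) := by
      have h7 := hlim i (Order.succ i) (Order.lt_succ i) hisucc
      rwa [show x - v i = -(v i - x) by ring, isAddValuation_val_neg hval] at h7
    have h8 := isAddValuation_add_eq_left hval h1
    rwa [show v i - x + (x - v (Order.succ i)) = v i - v (Order.succ i) by ring] at h8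
  have hgx : (g : WithTop Γ) < val (v i - x) := hxvi ▸ hlt1
  have hdiff : val (f.eval x) < val (f.eval (v i) - f.eval x) := by
    rw [hkey, hmul, ← hg]
    calc (g : WithTop Γ) < val (v i - x) := hgx
      _ ≤ val (v i - x) + val (c : K') := le_add_of_nonneg_right c.2
  have hfin := isAddValuation_add_eq_left hval hdiff
  rw [show f.eval x + (f.eval (v i) - f.eval x) = f.eval (v i) by ring] at hfin
  rw [hfin]
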